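/- For every k ∈ ℝ such that p(k/λᵐ) ≠ 0 for all integers m ≥ 1 (equivalently k ∉ ∪_{m≥1} λᵐ·Z with Z = ℤ + {1/3, 2/3}), one has lim_{n→∞} (1/n)·log|det(B(k/λⁿ)·B(k/λⁿ⁻¹)·…·B(k/λ))| = log 3; equivalently, lim_{n→∞} (1/n)·∑_{m=1}^{n} log|p(k/λᵐ)| = log 3. -/

import Mathlib

open Filter

/-- The Perron–Frobenius eigenvalue `λ = (1+√13)/2` of `M = [[1,1],[3,0]]`. -/
noncomputable def lam : ℝ := (1 + Real.sqrt 13) / 2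

/-- `p(k) = e^{2πikλ} + e^{2πik(λ+1)} + e^{2πik(λ+2)}`. -/
noncomputable def pfun (k : ℝ) : ℂ :=
  Complex.exp (((2 * Real.pi * k * lam : ℝ) : ℂ) * Complex.I) +
  Complex.exp (((2 * Real.pi * k * (lam + 1) : ℝ) : ℂ) * Complex.I) +
  Complex.exp (((2 * Real.pi * k * (lam + 2) : ℝ) : ℂ) * Complex.I)

/-- The Fourier matrix `B(k) = [[1,1],[p(k),0]]`. -/
noncomputable def Bmat (k : ℝ) : Matrix (Fin 2) (Fin 2) ℂ :=
  !![1, 1; pfun k, 0]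

/-- The inward matrix product `Binw k n = B(k/λⁿ)·B(k/λⁿ⁻¹)·…·B(k/λ)`. -/
noncomputable def Binw (k : ℝ) : ℕ → Matrix (Fin 2) (Fin 2) ℂ
  | 0 => 1
  | n + 1 => Bmat (k / lam ^ (n + 1)) * Binw k n

lemma pfun_zero : pfun 0 = 3 := by
  simp [pfun]
  norm_num

lemma pfun_continuous : Continuous pfun := by
  unfold pfun
  fun_prop

lemma one_lt_lam : 1 < lam := by
  have : (3 : ℝ) ≤ Real.sqrt 13 := by
    rw [show (3:ℝ) = Real.sqrt 9 by rw [show (9:ℝ) = 3^2 by norm_num, Real.sqrt_sq]; norm_num]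
    exact Real.sqrt_le_sqrt (by norm_num)
  unfold lam; linarith

lemma det_Bmat (k : ℝ) : (Bmat k).det = -pfun k := by
  simp [Bmat, Matrix.det_fin_two_of]

lemma abs_det_Binw (k : ℝ) (n : ℕ) :
    ‖(Binw k n).det‖ = ∏ i ∈ Finset.range n, ‖pfun (k / lam ^ (i + 1))‖ := by
  induction n with
  | zero => simp [Binw]
  | succ n ih =>
      rw [Finset.prod_range_succ, ← ih]
      simp [Binw, Matrix.det_mul, det_Bmat, map_mul, mul_comm]

/-- For every `k ∈ ℝ` with `p(k/λᵐ) ≠ 0` for all `m ≥ 1`, one has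
`lim_{n→∞} (1/n)·log|det(B(k/λⁿ)·…·B(k/λ))| = log 3`; equivalently,
`lim_{n→∞} (1/n)·∑_{m=1}^n log|p(k/λᵐ)| = log 3`. -/
theorem stmt5 (k : ℝ) (hk : ∀ m : ℕ, 1 ≤ m → pfun (k / lam ^ m) ≠ 0) :
    Tendsto (fun n : ℕ => (n : ℝ)⁻¹ * Real.log (‖(Binw k n).det‖))
      atTop (nhds (Real.log 3)) ∧
    Tendsto (fun n : ℕ =>
        (n : ℝ)⁻¹ * ∑ m ∈ Finset.Icc 1 n, Real.log (‖pfun (k / lam ^ m)‖))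
      atTop (nhds (Real.log 3)) := by
  have hlam : 1 < lam := one_lt_lam
  have hlam0 : 0 < lam := lt_trans one_pos hlam
  -- k / lam ^ m → 0
  have htend0 : Tendsto (fun m : ℕ => k / lam ^ m) atTop (nhds 0) := by
    have : Tendsto (fun m : ℕ => (lam⁻¹) ^ m) atTop (nhds 0) :=
      tendsto_pow_atTop_nhds_zero_of_lt_one (by positivity) (by
        rw [inv_lt_one_iff₀]; right; exact hlam)
    have := this.const_mul k
    simpa [div_eq_mul_inv, inv_pow] using this
  -- log |pfun (k / lam^m)| → log 3
  have hlog : Tendsto (fun m : ℕ => Real.log (‖pfun (k / lam ^ m)‖)) atTop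
      (nhds (Real.log 3)) := by
    have h1 : Tendsto (fun m : ℕ => ‖pfun (k / lam ^ m)‖) atTop (nhds 3) := by
      have := (continuous_norm.comp pfun_continuous).continuousAt (x := (0:ℝ))
      have h2 := this.tendsto.comp htend0
      simpa [pfun_zero, Function.comp_def] using h2
    exact (Real.continuousAt_log (by norm_num)).tendsto.comp h1
  -- Cesàro
  have hces : Tendsto (fun n : ℕ =>
      (n : ℝ)⁻¹ * ∑ i ∈ Finset.range n, Real.log (‖pfun (k / lam ^ (i + 1))‖))
      atTop (nhds (Real.log 3)) := by
    have : Tendsto (fun m : ℕ => Real.log (‖pfun (k / lam ^ (m + 1))‖)) atTop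
        (nhds (Real.log 3)) := hlog.comp (tendsto_add_atTop_nat 1)
    exact this.cesaro
  have hsum_eq : ∀ n : ℕ, ∑ m ∈ Finset.Icc 1 n, Real.log (‖pfun (k / lam ^ m)‖)
      = ∑ i ∈ Finset.range n, Real.log (‖pfun (k / lam ^ (i + 1))‖) := by
    intro n
    rw [show Finset.Icc 1 n = Finset.Ico 1 (n+1) by rw [Finset.Ico_add_one_right_eq_Icc],
      Finset.sum_Ico_eq_sum_range]
    simp [add_comm]
  have hpart2 : Tendsto (fun n : ℕ =>
      (n : ℝ)⁻¹ * ∑ m ∈ Finset.Icc 1 n, Real.log (‖pfun (k / lam ^ m)‖))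
      atTop (nhds (Real.log 3)) := by
    simpa only [hsum_eq] using hces
  refine ⟨?_, hpart2⟩
  have hlogdet : ∀ n : ℕ, Real.log (‖(Binw k n).det‖)
      = ∑ i ∈ Finset.range n, Real.log (‖pfun (k / lam ^ (i + 1))‖) := by
    intro n
    rw [abs_det_Binw, Real.log_prod]
    intro i _
    simpa using (hk (i + 1) (Nat.le_add_left 1 i))
  simpa only [hlogdet] using hces
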